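/- Fix reals S_A>0, θ≥0, λ>0, an integer t≥0, and a real V with V > √(λθ). Then −S_A·(√(λθ) − V)² + λ·(1+(t+1)·S_A·V)·(1+t·S_A·V) ≤ 0 holds if and only if both λ·(t+1)·t·S_A < 1 and V ≥ v_th(λ,t). -/

import Mathlib

noncomputable def vth (SA th lam : ℝ) (t : ℕ) : ℝ :=
  (Real.sqrt (lam * th) + lam * ((t : ℝ) + 1 / 2) +
      Real.sqrt lam *
        Real.sqrt (Real.sqrt (lam * th) * (2 * (t : ℝ) + 1) +
          lam * th * ((t : ℝ) + 1) * (t : ℝ) * SA + lam / 4 + 1 / SA)) /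
    (1 - lam * ((t : ℝ) + 1) * (t : ℝ) * SA)

lemma quad_iff (a b c s V R : ℝ) (hs0 : 0 ≤ s) (hV : s < V) (hb : 0 ≤ b)
    (hQs : a * s ^ 2 - b * s - c < 0) (hR0 : 0 ≤ R) (hR2 : R ^ 2 = b ^ 2 / 4 + a * c) :
    (0 ≤ a * V ^ 2 - b * V - c) ↔ (0 < a ∧ (b / 2 + R) / a ≤ V) := by
  have hV0 : 0 < V := lt_of_le_of_lt hs0 hV
  constructor
  · intro h
    have hapos : 0 < a := by
      nlinarith [mul_nonneg (sub_nonneg.2 hV.le) (show (0:ℝ) ≤ V + s by linarith),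
        mul_nonneg hb (sub_nonneg.2 hV.le)]
    have h2 : b / 2 < a * V := by
      nlinarith [mul_nonneg hapos.le (sq_nonneg (V - s)), sub_nonneg.2 hV.le,
        mul_pos hapos (sub_pos.2 hV)]
    refine ⟨hapos, ?_⟩
    rw [div_le_iff₀ hapos]
    nlinarith [mul_nonneg hapos.le h, hR2, show (0:ℝ) < a * V - b / 2 + R by linarith]
  · rintro ⟨hapos, hle⟩
    rw [div_le_iff₀ hapos] at hle
    nlinarith [hR2, hapos, mul_nonneg (show (0:ℝ) ≤ V * a - b / 2 - R by linarith)
      (show (0:ℝ) ≤ V * a - b / 2 + R by nlinarith)]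

theorem stmt_1 (SA th lam V : ℝ) (hSA : 0 < SA) (hth : 0 ≤ th) (hlam : 0 < lam)
    (t : ℕ) (hV : Real.sqrt (lam * th) < V) :
    (-SA * (Real.sqrt (lam * th) - V) ^ 2 +
        lam * (1 + ((t : ℝ) + 1) * SA * V) * (1 + (t : ℝ) * SA * V) ≤ 0) ↔
      (lam * ((t : ℝ) + 1) * (t : ℝ) * SA < 1 ∧ V ≥ vth SA th lam t) := by
  have hth' : 0 ≤ lam * th := by positivity
  have hs0 : 0 ≤ Real.sqrt (lam * th) := Real.sqrt_nonneg _
  have hs2 : Real.sqrt (lam * th) ^ 2 = lam * th := Real.sq_sqrt hth'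
  have hV0 : 0 < V := lt_of_le_of_lt hs0 hV
  unfold vth
  rw [← Real.sqrt_mul hlam.le]
  set s := Real.sqrt (lam * th) with hsdef
  set R := Real.sqrt (lam * (s * (2 * (t:ℝ) + 1) + lam * th * ((t:ℝ) + 1) * (t:ℝ) * SA +
    lam / 4 + 1 / SA)) with hRdef
  have hE0 : 0 ≤ s * (2 * (t:ℝ) + 1) + lam * th * ((t:ℝ) + 1) * (t:ℝ) * SA + lam / 4 + 1 / SA := by
    have h1 : 0 ≤ s * (2 * (t:ℝ) + 1) := mul_nonneg hs0 (by positivity)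
    have h2 : 0 ≤ lam * th * ((t:ℝ) + 1) * (t:ℝ) * SA := by positivity
    have h3 : 0 < lam / 4 := by positivity
    have h4 : 0 < 1 / SA := by positivity
    linarith
  have hR0 : 0 ≤ R := Real.sqrt_nonneg _
  have hR2 : R ^ 2 = lam * (s * (2 * (t:ℝ) + 1) + lam * th * ((t:ℝ) + 1) * (t:ℝ) * SA +
      lam / 4 + 1 / SA) := Real.sq_sqrt (by positivity)
  have hb : 0 ≤ 2 * s + lam * (2 * (t:ℝ) + 1) := by
    have : 0 ≤ lam * (2 * (t:ℝ) + 1) := by positivity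
    linarith
  have hQs : (1 - lam * ((t:ℝ) + 1) * (t:ℝ) * SA) * s ^ 2 - (2 * s + lam * (2 * (t:ℝ) + 1)) * s
      - (lam / SA - lam * th) < 0 := by
    have h1 : 0 ≤ lam * ((t:ℝ) + 1) * (t:ℝ) * SA * s ^ 2 := by positivity
    have h2 : 0 ≤ lam * (2 * (t:ℝ) + 1) * s :=
      mul_nonneg (by positivity) hs0
    have h3 : 0 < lam / SA := by positivity
    nlinarith [hs2]
  have hR2' : R ^ 2 = (2 * s + lam * (2 * (t:ℝ) + 1)) ^ 2 / 4 +
      (1 - lam * ((t:ℝ) + 1) * (t:ℝ) * SA) * (lam / SA - lam * th) := by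
    rw [hR2]
    field_simp
    linear_combination (-4 * SA) * hs2
  have hkey : -SA * (s - V) ^ 2 + lam * (1 + ((t:ℝ) + 1) * SA * V) * (1 + (t:ℝ) * SA * V)
      = -SA * ((1 - lam * ((t:ℝ) + 1) * (t:ℝ) * SA) * V ^ 2
        - (2 * s + lam * (2 * (t:ℝ) + 1)) * V - (lam / SA - lam * th)) := by
    field_simp
    linear_combination (-SA) * hs2
  have main := quad_iff (1 - lam * ((t:ℝ) + 1) * (t:ℝ) * SA) (2 * s + lam * (2 * (t:ℝ) + 1))
    (lam / SA - lam * th) s V R hs0 hV hb hQs hR0 hR2'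
  rw [hkey, ge_iff_le,
    show s + lam * ((t:ℝ) + 1 / 2) + R = (2 * s + lam * (2 * (t:ℝ) + 1)) / 2 + R from by ring]
  constructor
  · intro h
    obtain ⟨h1, h2⟩ := main.mp (by nlinarith)
    exact ⟨by linarith, h2⟩
  · rintro ⟨h1, h2⟩
    have := main.mpr ⟨by linarith, h2⟩
    nlinarith
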